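/- Let m be a positive integer and z ∈ ℝ^m with z_1 ≥ z_2 ≥ … ≥ z_m ≥ 0. Then a point x ∈ ℝ^m is an extreme point of the anti-blocking polytope Π̂(z) if and only if there exist an integer k with 0 ≤ k ≤ m and an injective map φ : {1,…,k} → {1,…,m} such that x_{φ(i)} = z_i for all i ∈ {1,…,k} and x_j = 0 for all j ∈ {1,…,m} not in the image of φ. -/

import Mathlib

open Finset

/-- The permutohedron `Π(z)`: the convex hull of all vectors obtained by
permuting the coordinates of `z`. -/
def permutohedron {m : ℕ} (z : Fin m → ℝ) : Set (Fin m → ℝ) :=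
  convexHull ℝ {x | ∃ σ : Equiv.Perm (Fin m), ∀ i, x i = z (σ i)}

/-- The anti-blocking polytope `Π̂(z)`: all points `x` with `0 ≤ x ≤ y`
coordinatewise for some `y ∈ Π(z)`. -/
def antiBlocking {m : ℕ} (z : Fin m → ℝ) : Set (Fin m → ℝ) :=
  {x | ∃ y ∈ permutohedron z, ∀ i, 0 ≤ x i ∧ x i ≤ y i}

/-- The candidate set: partial placements of the top values of `z`. -/
def candSet {m : ℕ} (z : Fin m → ℝ) : Set (Fin m → ℝ) :=
  {x | ∃ (k : ℕ) (hk : k ≤ m) (φ : Fin k → Fin m), Function.Injective φ ∧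
        (∀ i : Fin k, x (φ i) = z (Fin.castLE hk i)) ∧
        (∀ j : Fin m, (∀ i : Fin k, φ i ≠ j) → x j = 0)}

/-- strict mono maps between `Fin`s grow at least like the identity -/
lemma strictMono_le_apply {r s : ℕ} (f : Fin r → Fin s) (hf : StrictMono f) :
    ∀ n (h : n < r), n ≤ (f ⟨n, h⟩ : ℕ) := by
  intro n
  induction n with
  | zero => intro h; exact Nat.zero_le _
  | succ n ih =>
    intro h
    have h' : n < r := Nat.lt_of_succ_lt h
    have h1 := ih h'
    have h2 : f ⟨n, h'⟩ < f ⟨n + 1, h⟩ := hf (by simp [Fin.lt_def])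
    have := Fin.lt_def.mp h2
    omega

/-- Any two injections of `Fin k` into `Fin m` differ by a permutation. -/
lemma exists_perm_comp {m k : ℕ} (hk : k ≤ m) (φ : Fin k → Fin m)
    (hφ : Function.Injective φ) :
    ∃ σ : Equiv.Perm (Fin m), ∀ i, σ (φ i) = Fin.castLE hk i := by
  classical
  set f : Fin k → Fin m := Fin.castLE hk with hf
  have hfinj : Function.Injective f := Fin.castLE_injective hk
  let e1 : Fin k ≃ Set.range φ := Equiv.ofInjective φ hφ
  let e2 : Fin k ≃ Set.range f := Equiv.ofInjective f hfinj
  have hcard : Fintype.card ↥(Set.range φ)ᶜ = Fintype.card ↥(Set.range f)ᶜ := by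
    rw [Fintype.card_compl_set, Fintype.card_compl_set,
      Set.card_range_of_injective hφ, Set.card_range_of_injective hfinj]
  let g : ↥(Set.range φ)ᶜ ≃ ↥(Set.range f)ᶜ := Fintype.equivOfCardEq hcard
  refine ⟨(Equiv.Set.sumCompl (Set.range φ)).symm.trans
    (((e1.symm.trans e2).sumCongr g).trans (Equiv.Set.sumCompl (Set.range f))), ?_⟩
  intro i
  have hmem : φ i ∈ Set.range φ := ⟨i, rfl⟩
  simp only [Equiv.trans_apply, Equiv.Set.sumCompl_symm_apply_of_mem hmem,
    Equiv.sumCongr_apply, Sum.map_inl]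
  have h1 : e1.symm ⟨φ i, hmem⟩ = i := by
    have h2 : (⟨φ i, hmem⟩ : Set.range φ) = e1 i := rfl
    rw [h2, Equiv.symm_apply_apply]
  rw [h1]
  rfl

section
variable {m : ℕ} {z : Fin m → ℝ}

lemma convex_antiBlocking : Convex ℝ (antiBlocking z) := by
  intro x1 h1 x2 h2 a b ha hb hab
  obtain ⟨y1, hy1, hb1⟩ := h1
  obtain ⟨y2, hy2, hb2⟩ := h2
  refine ⟨a • y1 + b • y2, (convex_convexHull ℝ _) hy1 hy2 ha hb hab, fun i => ?_⟩
  have e1 : (a • x1 + b • x2) i = a * x1 i + b * x2 i := rfl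
  have e2 : (a • y1 + b • y2) i = a * y1 i + b * y2 i := rfl
  rw [e1, e2]
  constructor
  · have := (hb1 i).1; have := (hb2 i).1
    positivity
  · have h3 := mul_le_mul_of_nonneg_left (hb1 i).2 ha
    have h4 := mul_le_mul_of_nonneg_left (hb2 i).2 hb
    linarith

/-- The "first r coordinates" partial sum of z. -/
def Fz {m : ℕ} (z : Fin m → ℝ) (r : ℕ) : ℝ :=
  ∑ j ∈ univ.filter (fun j : Fin m => (j : ℕ) < r), z j

lemma filt_eq {n : ℕ} (r : ℕ) (h : r ≤ n) :
    (univ.filter (fun j : Fin n => (j : ℕ) < r)) =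
      (univ : Finset (Fin r)).image (Fin.castLE h) := by
  ext j
  simp only [mem_filter, mem_univ, true_and, mem_image]
  constructor
  · intro hj
    exact ⟨⟨j, hj⟩, Fin.ext rfl⟩
  · rintro ⟨a, rfl⟩
    exact a.isLt

lemma sum_filt {n : ℕ} (r : ℕ) (h : r ≤ n) (g : Fin n → ℝ) :
    ∑ j ∈ univ.filter (fun j : Fin n => (j : ℕ) < r), g j
      = ∑ i : Fin r, g (Fin.castLE h i) := by
  rw [filt_eq r h, Finset.sum_image (fun a _ b _ hab => Fin.castLE_injective h hab)]

/-- Sum of z over any r-subset is at most the sum of the top r values. -/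
lemma sum_subset_le (hmono : ∀ i j : Fin m, i ≤ j → z j ≤ z i)
    (B : Finset (Fin m)) : ∑ j ∈ B, z j ≤ Fz z B.card := by
  classical
  have hB : B.card ≤ m := le_trans (card_le_card (subset_univ B)) (by simp)
  have hsm : StrictMono (B.orderEmbOfFin rfl) := (B.orderEmbOfFin rfl).strictMono
  have himg : B = (univ : Finset (Fin B.card)).image (B.orderEmbOfFin rfl) := by
    ext j
    simp only [mem_image, mem_univ, true_and]
    constructor
    · intro hj
      have : j ∈ Set.range (B.orderEmbOfFin rfl) := by
        rw [Finset.range_orderEmbOfFin]; exact hj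
      exact this
    · rintro ⟨i, rfl⟩; exact Finset.orderEmbOfFin_mem B rfl i
  have hsum : ∑ j ∈ B, z j = ∑ i : Fin B.card, z (B.orderEmbOfFin rfl i) := by
    conv_lhs => rw [himg]
    rw [Finset.sum_image (fun a _ b _ hab => (B.orderEmbOfFin rfl).injective hab)]
  rw [hsum]
  unfold Fz
  rw [sum_filt B.card hB]
  apply Finset.sum_le_sum
  intro i _
  apply hmono
  rw [Fin.le_def]
  exact strictMono_le_apply _ hsm i i.isLt

/-- Key bound: for x in the anti-blocking polytope, any subset-sum is bounded by Fz. -/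
lemma sum_le_Fz (hmono : ∀ i j : Fin m, i ≤ j → z j ≤ z i) {x : Fin m → ℝ}
    (hx : x ∈ antiBlocking z) (A : Finset (Fin m)) :
    ∑ j ∈ A, x j ≤ Fz z A.card := by
  classical
  obtain ⟨y, hy, hbd⟩ := hx
  have h1 : ∑ j ∈ A, x j ≤ ∑ j ∈ A, y j :=
    Finset.sum_le_sum fun j _ => (hbd j).2
  refine le_trans h1 ?_
  have hconv : Convex ℝ {w : Fin m → ℝ | ∑ j ∈ A, w j ≤ Fz z A.card} := by
    apply convex_halfSpace_le
    exact ⟨fun u v => Finset.sum_add_distrib, fun c u => by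
      simp only [Pi.smul_apply, smul_eq_mul, Finset.mul_sum]⟩
  have hsub : {x : Fin m → ℝ | ∃ σ : Equiv.Perm (Fin m), ∀ i, x i = z (σ i)} ⊆
      {w : Fin m → ℝ | ∑ j ∈ A, w j ≤ Fz z A.card} := by
    rintro w ⟨σ, hσ⟩
    have : ∑ j ∈ A, w j = ∑ j ∈ A.image σ, z j := by
      rw [Finset.sum_image (fun a _ b _ hab => σ.injective hab)]
      exact Finset.sum_congr rfl fun j _ => hσ j
    rw [Set.mem_setOf_eq, this]
    have := sum_subset_le hmono (A.image σ)
    rwa [Finset.card_image_of_injective _ σ.injective] at this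
  exact convexHull_min hsub hconv hy

lemma perm_nonneg (hpos : ∀ i, 0 ≤ z i) {y : Fin m → ℝ}
    (hy : y ∈ permutohedron z) : ∀ j, 0 ≤ y j := by
  intro j
  have hconv : Convex ℝ {w : Fin m → ℝ | 0 ≤ w j} :=
    convex_halfSpace_ge ⟨fun u v => rfl, fun c u => rfl⟩ 0
  have hsub : {x : Fin m → ℝ | ∃ σ : Equiv.Perm (Fin m), ∀ i, x i = z (σ i)} ⊆
      {w : Fin m → ℝ | 0 ≤ w j} := by
    rintro w ⟨σ, hσ⟩
    rw [Set.mem_setOf_eq, hσ j]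
    exact hpos _
  exact convexHull_min hsub hconv hy

/-- Box decomposition: a point between 0 and v is in the hull of the "corners". -/
lemma mem_corners (v x : Fin m → ℝ) (h0 : ∀ j, 0 ≤ x j) (hle : ∀ j, x j ≤ v j) :
    x ∈ convexHull ℝ {c : Fin m → ℝ | ∀ j, c j = v j ∨ c j = 0} := by
  have hpi : x ∈ Set.pi Set.univ (fun j => convexHull ℝ {0, v j}) := by
    intro j _
    show x j ∈ convexHull ℝ {0, v j}
    rw [convexHull_pair, segment_eq_Icc (le_trans (h0 j) (hle j))]
    exact ⟨h0 j, hle j⟩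
  rw [← convexHull_pi] at hpi
  refine convexHull_mono ?_ hpi
  intro c hc j
  have := hc j (Set.mem_univ j)
  simp only [Set.mem_insert_iff, Set.mem_singleton_iff] at this
  tauto

lemma cand_subset (hpos : ∀ i, 0 ≤ z i) : candSet z ⊆ antiBlocking z := by
  rintro x ⟨k, hk, φ, hφ, hval, hzero⟩
  obtain ⟨σ, hσ⟩ := exists_perm_comp hk φ hφ
  refine ⟨fun j => z (σ j), subset_convexHull ℝ _ ⟨σ, fun i => rfl⟩, fun j => ?_⟩
  by_cases hj : ∃ i, φ i = j
  · obtain ⟨i, rfl⟩ := hj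
    rw [hval i]
    refine ⟨hpos _, ?_⟩
    show z (Fin.castLE hk i) ≤ z (σ (φ i))
    rw [hσ i]
  · push_neg at hj
    rw [hzero j hj]
    exact ⟨le_refl _, hpos _⟩


/-- A placement of distinct z-values on a finite set of coordinates. -/
def placement {m : ℕ} (z : Fin m → ℝ) (S : Finset (Fin m)) (τ : Fin m → Fin m) :
    Fin m → ℝ := fun j => if j ∈ S then z (τ j) else 0

lemma placement_mem (hmono : ∀ i j : Fin m, i ≤ j → z j ≤ z i) (hpos : ∀ i, 0 ≤ z i)
    (S : Finset (Fin m)) :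
    ∀ τ : Fin m → Fin m, Set.InjOn τ S → placement z S τ ∈ convexHull ℝ (candSet z) := by
  classical
  induction S using Finset.strongInduction with
  | _ S ih =>
    intro τ hτ
    set r := S.card with hrdef
    have hr : r ≤ m := le_trans (card_le_card (subset_univ S)) (by simp)
    set T := S.image τ with hTdef
    have hT : T.card = r := Finset.card_image_of_injOn hτ
    set iso := T.orderIsoOfFin hT with hisodef
    have hmemT : ∀ j ∈ S, τ j ∈ T := fun j hj => Finset.mem_image_of_mem τ hj
    -- the rank-normalized placement v, given by τ'
    set τ' : Fin m → Fin m := fun j =>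
      if h : j ∈ S then Fin.castLE hr (iso.symm ⟨τ j, hmemT j h⟩) else j with hτ'def
    set v : Fin m → ℝ := placement z S τ' with hvdef
    have hτ'S : ∀ j (h : j ∈ S), τ' j = Fin.castLE hr (iso.symm ⟨τ j, hmemT j h⟩) := by
      intro j h; simp only [hτ'def, dif_pos h]
    -- v is a candidate point
    have hvcand : v ∈ candSet z := by
      have hbij : Function.Bijective
          (fun p : {p // p ∈ S} => (⟨τ p.1, hmemT p.1 p.2⟩ : {t // t ∈ T})) := by
        rw [Fintype.bijective_iff_injective_and_card]
        constructor
        · intro p q hpq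
          exact Subtype.ext (hτ p.2 q.2 (congrArg Subtype.val hpq))
        · simp [Fintype.card_coe, hT, hrdef]
      set eτ := Equiv.ofBijective _ hbij with heτdef
      refine ⟨r, hr, fun i => (eτ.symm (iso i)).1, ?_, ?_, ?_⟩
      · intro i1 i2 h12
        have := eτ.symm.injective (Subtype.ext h12)
        exact iso.injective this
      · intro i
        have hmem : (eτ.symm (iso i)).1 ∈ S := (eτ.symm (iso i)).2
        have hτval : τ (eτ.symm (iso i)).1 = (iso i).1 := by
          have := congrArg Subtype.val (eτ.apply_symm_apply (iso i))
          exact this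
        rw [hvdef]
        show (if _ ∈ S then _ else _) = _
        rw [if_pos hmem, hτ'S _ hmem]
        congr 1
        have : (⟨τ (eτ.symm (iso i)).1, hmemT _ hmem⟩ : {t // t ∈ T}) = iso i :=
          Subtype.ext hτval
        rw [this, OrderIso.symm_apply_apply]
      · intro j hj
        by_cases hjS : j ∈ S
        · exfalso
          set t : {t // t ∈ T} := ⟨τ j, hmemT j hjS⟩ with htdef
          have : eτ ⟨j, hjS⟩ = t := rfl
          have h2 : eτ.symm t = ⟨j, hjS⟩ := by rw [← this, Equiv.symm_apply_apply]
          refine hj (iso.symm t) ?_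
          show ((eτ.symm (iso (iso.symm t))) : Fin m) = j
          rw [OrderIso.apply_symm_apply, h2]
        · show (if _ ∈ S then _ else _) = _
          rw [if_neg hjS]
    -- the original placement is dominated by v
    have h0 : ∀ j, 0 ≤ placement z S τ j := by
      intro j
      unfold placement
      split
      · exact hpos _
      · exact le_refl _
    have hle : ∀ j, placement z S τ j ≤ v j := by
      intro j
      by_cases hj : j ∈ S
      · show (if _ then _ else _) ≤ v j
        rw [if_pos hj, hvdef]
        show _ ≤ (if _ ∈ S then z (τ' j) else _)
        rw [if_pos hj, hτ'S j hj]
        apply hmono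
        rw [Fin.le_def]
        show ((iso.symm ⟨τ j, hmemT j hj⟩ : Fin r) : ℕ) ≤ ((τ j : Fin m) : ℕ)
        set i := iso.symm ⟨τ j, hmemT j hj⟩ with hidef
        have : (⟨τ j, hmemT j hj⟩ : {t // t ∈ T}) = iso i := by
          rw [hidef, OrderIso.apply_symm_apply]
        have hval : (τ j : ℕ) = ((iso i).1 : ℕ) := by rw [← this]
        rw [hval]
        have hcoe : ((iso i).1 : ℕ) = ((T.orderEmbOfFin hT i : Fin m) : ℕ) := by
          rw [Finset.coe_orderIsoOfFin_apply]
        rw [hcoe]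
        exact strictMono_le_apply _ (T.orderEmbOfFin hT).strictMono i i.isLt
      · show (if _ then _ else _) ≤ v j
        rw [if_neg hj, hvdef]
        show (0:ℝ) ≤ (if _ ∈ S then _ else (0:ℝ))
        rw [if_neg hj]
    -- corners of the box [0, v] lie in the hull of candSet
    have hcorners : {c : Fin m → ℝ | ∀ j, c j = v j ∨ c j = 0} ⊆
        convexHull ℝ (candSet z) := by
      intro c hc
      set S' := S.filter (fun j => c j ≠ 0) with hS'def
      have hS'sub : S' ⊆ S := Finset.filter_subset _ _
      by_cases hSS : S' = S
      · -- c = v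
        have : c = v := by
          funext j
          by_cases hj : j ∈ S
          · have hj' : j ∈ S' := hSS ▸ hj
            have := (Finset.mem_filter.mp hj').2
            rcases hc j with h | h
            · exact h
            · exact absurd h this
          · have hvj : v j = 0 := by
              rw [hvdef]; show (if _ ∈ S then _ else _) = _; rw [if_neg hj]
            rcases hc j with h | h
            · rw [h]
            · rw [h, hvj]
        rw [this]
        exact subset_convexHull ℝ _ hvcand
      · -- c is a strictly smaller placement
        have hss : S' ⊂ S := Finset.ssubset_iff_subset_ne.mpr ⟨hS'sub, hSS⟩
        have hτ'inj : Set.InjOn τ' S' := by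
          intro p hp q hq hpq
          have hpS := hS'sub hp
          have hqS := hS'sub hq
          rw [hτ'S p hpS, hτ'S q hqS] at hpq
          have := Fin.castLE_injective hr hpq
          have := iso.symm.injective this
          exact hτ hpS hqS (congrArg Subtype.val this)
        have hceq : c = placement z S' τ' := by
          funext j
          unfold placement
          by_cases hj : j ∈ S'
          · rw [if_pos hj]
            have hjS := hS'sub hj
            have hne := (Finset.mem_filter.mp hj).2
            rcases hc j with h | h
            · rw [h, hvdef]
              show (if _ ∈ S then _ else _) = _
              rw [if_pos hjS]
            · exact absurd h hne
          · rw [if_neg hj]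
            rcases hc j with h | h
            · by_cases hjS : j ∈ S
              · have : c j = 0 := by
                  by_contra hne
                  exact hj (Finset.mem_filter.mpr ⟨hjS, hne⟩)
                exact this
              · rw [h, hvdef]
                show (if _ ∈ S then _ else _) = _
                rw [if_neg hjS]
            · exact h
        rw [hceq]
        exact ih S' hss τ' hτ'inj
    have hbox := mem_corners v (placement z S τ) h0 hle
    have := convexHull_min hcorners (convex_convexHull ℝ _)
    exact this hbox
lemma antiBlocking_subset_hull (hmono : ∀ i j : Fin m, i ≤ j → z j ≤ z i)
    (hpos : ∀ i, 0 ≤ z i) : antiBlocking z ⊆ convexHull ℝ (candSet z) := by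
  classical
  rintro x ⟨y, hy, hbd⟩
  have hbox := mem_corners y x (fun j => (hbd j).1) (fun j => (hbd j).2)
  refine convexHull_min ?_ (convex_convexHull ℝ _) hbox
  intro c hc
  set L : (Fin m → ℝ) → (Fin m → ℝ) := fun w j => if c j ≠ 0 then w j else 0 with hLdef
  have hcL : c = L y := by
    funext j
    show c j = if c j ≠ 0 then y j else 0
    by_cases h : c j = 0
    · rw [if_neg (by simpa using h)]
      exact h
    · rw [if_pos h]
      rcases hc j with h' | h'
      · exact h'
      · exact absurd h' h
  have key : y ∈ {w : Fin m → ℝ | L w ∈ convexHull ℝ (candSet z)} := by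
    refine convexHull_min ?_ ?_ hy
    · rintro w ⟨σ, hσ⟩
      show L w ∈ convexHull ℝ (candSet z)
      have : L w = placement z (univ.filter fun j => c j ≠ 0) σ := by
        funext j
        by_cases h : c j = 0 <;> simp [hLdef, placement, h, hσ j]
      rw [this]
      exact placement_mem hmono hpos _ σ (σ.injective.injOn)
    · intro w1 hw1 w2 hw2 a b ha hb hab
      show L (a • w1 + b • w2) ∈ convexHull ℝ (candSet z)
      have : L (a • w1 + b • w2) = a • L w1 + b • L w2 := by
        funext j
        by_cases h : c j = 0 <;>
          simp [hLdef, h, Pi.add_apply, Pi.smul_apply, smul_eq_mul, mul_zero, add_zero]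
      rw [this]
      exact (convex_convexHull ℝ _) hw1 hw2 ha hb hab
  rw [hcL]
  exact key

lemma antiBlocking_eq_hull (hmono : ∀ i j : Fin m, i ≤ j → z j ≤ z i)
    (hpos : ∀ i, 0 ≤ z i) : antiBlocking z = convexHull ℝ (candSet z) :=
  le_antisymm (antiBlocking_subset_hull hmono hpos)
    (convexHull_min (cand_subset hpos) convex_antiBlocking)

end

/-- For `z₁ ≥ z₂ ≥ … ≥ z_m ≥ 0`, the extreme points of `Π̂(z)` are exactly the
vectors placing `z₁,…,z_k` injectively into `k` positions (for some
`0 ≤ k ≤ m`) and `0` elsewhere. -/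
theorem extremePoints_antiBlocking (m : ℕ) (hm : 0 < m) (z : Fin m → ℝ)
    (hmono : ∀ i j : Fin m, i ≤ j → z j ≤ z i) (hpos : ∀ i, 0 ≤ z i)
    (x : Fin m → ℝ) :
    x ∈ Set.extremePoints ℝ (antiBlocking z) ↔
      ∃ (k : ℕ) (hk : k ≤ m) (φ : Fin k → Fin m), Function.Injective φ ∧
        (∀ i : Fin k, x (φ i) = z (Fin.castLE hk i)) ∧
        (∀ j : Fin m, (∀ i : Fin k, φ i ≠ j) → x j = 0) := by
  classical
  constructor
  · intro hx
    rw [antiBlocking_eq_hull hmono hpos] at hx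
    have h2 : x ∈ candSet z := extremePoints_convexHull_subset hx
    exact h2
  · rintro ⟨k, hk, φ, hφ, hval, hzero⟩
    rw [mem_extremePoints]
    refine ⟨cand_subset hpos ⟨k, hk, φ, hφ, hval, hzero⟩, ?_⟩
    intro x1 hx1 x2 hx2 hseg
    obtain ⟨a, b, ha, hb, hab, hsum⟩ := hseg
    obtain ⟨y1, -, hb1⟩ := id hx1
    obtain ⟨y2, -, hb2⟩ := id hx2
    -- the index sets A r
    set A : ℕ → Finset (Fin m) :=
      fun r => univ.filter (fun j => ∃ i : Fin k, (i : ℕ) < r ∧ φ i = j) with hAdef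
    have hArepr : ∀ r, A r = (univ.filter (fun i : Fin k => (i : ℕ) < r)).image φ := by
      intro r
      ext j
      simp only [hAdef, mem_filter, mem_univ, true_and, mem_image]
    have hAcard : ∀ r, r ≤ k → (A r).card = r := by
      intro r hr
      rw [hArepr, Finset.card_image_of_injective _ hφ]
      have : (univ.filter (fun i : Fin k => (i : ℕ) < r))
          = (univ : Finset (Fin r)).image (Fin.castLE hr) := by
        ext i
        simp only [mem_filter, mem_univ, true_and, mem_image]
        constructor
        · intro hi; exact ⟨⟨i, hi⟩, Fin.ext rfl⟩
        · rintro ⟨a, rfl⟩; exact a.isLt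
      rw [this, Finset.card_image_of_injective _ (Fin.castLE_injective hr), card_univ,
        Fintype.card_fin]
    have hAsum : ∀ (r : ℕ) (w : Fin m → ℝ), ∑ j ∈ A r, w j
        = ∑ i ∈ univ.filter (fun i : Fin k => (i : ℕ) < r), w (φ i) := by
      intro r w
      rw [hArepr, Finset.sum_image (fun a _ b _ hab' => hφ hab')]
    -- x achieves the bound Fz z r on A r
    have hxsum : ∀ r, r ≤ k → ∑ j ∈ A r, x j = Fz z r := by
      intro r hr
      rw [hAsum]
      have h1 : ∑ i ∈ univ.filter (fun i : Fin k => (i : ℕ) < r), x (φ i)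
          = ∑ i ∈ univ.filter (fun i : Fin k => (i : ℕ) < r), z (Fin.castLE hk i) :=
        Finset.sum_congr rfl fun i _ => hval i
      rw [h1, sum_filt r hr (fun i : Fin k => z (Fin.castLE hk i))]
      unfold Fz
      rw [sum_filt r (hr.trans hk) z]
      rfl
    -- x1 and x2 also achieve the bound
    have hkey : ∀ r, r ≤ k → ∑ j ∈ A r, x1 j = Fz z r ∧ ∑ j ∈ A r, x2 j = Fz z r := by
      intro r hr
      set s1 := ∑ j ∈ A r, x1 j with hs1
      set s2 := ∑ j ∈ A r, x2 j with hs2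
      have hle1 : s1 ≤ Fz z r := by
        have h := sum_le_Fz hmono hx1 (A r)
        rwa [hAcard r hr] at h
      have hle2 : s2 ≤ Fz z r := by
        have h := sum_le_Fz hmono hx2 (A r)
        rwa [hAcard r hr] at h
      have hcomb : a * s1 + b * s2 = Fz z r := by
        have hxr := hxsum r hr
        have hsplit : ∑ j ∈ A r, (a • x1 + b • x2) j = a * s1 + b * s2 := by
          simp only [Pi.add_apply, Pi.smul_apply, smul_eq_mul]
          rw [Finset.sum_add_distrib, ← Finset.mul_sum, ← Finset.mul_sum]
        rw [hsum] at hsplit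
        rw [hxr] at hsplit
        linarith
      have hmulF : a * Fz z r + b * Fz z r = Fz z r := by
        rw [← add_mul, hab, one_mul]
      constructor
      · refine le_antisymm hle1 ?_
        have hb2' : b * s2 ≤ b * Fz z r := mul_le_mul_of_nonneg_left hle2 hb.le
        have : a * Fz z r ≤ a * s1 := by linarith
        exact le_of_mul_le_mul_left this ha
      · refine le_antisymm hle2 ?_
        have hb1' : a * s1 ≤ a * Fz z r := mul_le_mul_of_nonneg_left hle1 ha.le
        have : b * Fz z r ≤ b * s2 := by linarith
        exact le_of_mul_le_mul_left this hb
    -- telescoping: each coordinate in the range of φ is determined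
    have main : ∀ w : Fin m → ℝ, (∀ r, r ≤ k → ∑ j ∈ A r, w j = Fz z r) →
        ∀ i : Fin k, w (φ i) = z (Fin.castLE hk i) := by
      intro w hw i
      have hik : (i : ℕ) < k := i.isLt
      have hins : A ((i : ℕ) + 1) = insert (φ i) (A (i : ℕ)) := by
        ext j
        simp only [hAdef, mem_filter, mem_univ, true_and, mem_insert]
        constructor
        · rintro ⟨i', hi', rfl⟩
          rcases Nat.lt_succ_iff_lt_or_eq.mp hi' with h | h
          · right; exact ⟨i', h, rfl⟩
          · left; congr 1; exact Fin.ext h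
        · rintro (rfl | ⟨i', hi', rfl⟩)
          · exact ⟨i, Nat.lt_succ_self _, rfl⟩
          · exact ⟨i', Nat.lt_succ_of_lt hi', rfl⟩
      have hnot : φ i ∉ A (i : ℕ) := by
        simp only [hAdef, mem_filter, mem_univ, true_and]
        rintro ⟨i', hi', heq⟩
        rw [hφ heq] at hi'
        exact lt_irrefl _ hi'
      have hFstep : Fz z ((i : ℕ) + 1) = z (Fin.castLE hk i) + Fz z (i : ℕ) := by
        set e : Fin m := ⟨(i : ℕ), lt_of_lt_of_le hik hk⟩ with hedef
        have hfil : univ.filter (fun j : Fin m => (j : ℕ) < (i : ℕ) + 1)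
            = insert e (univ.filter (fun j : Fin m => (j : ℕ) < (i : ℕ))) := by
          ext j
          simp only [mem_filter, mem_univ, true_and, mem_insert]
          constructor
          · intro hj
            rcases Nat.lt_succ_iff_lt_or_eq.mp hj with h | h
            · right; exact h
            · left; exact Fin.ext h
          · rintro (rfl | h)
            · exact Nat.lt_succ_self _
            · exact Nat.lt_succ_of_lt h
        have hnotmem : e ∉ univ.filter (fun j : Fin m => (j : ℕ) < (i : ℕ)) := by
          simp [hedef]
        unfold Fz
        rw [hfil, Finset.sum_insert hnotmem]
        congr 1
      have h1 := hw ((i : ℕ) + 1) hik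
      have h0 := hw (i : ℕ) (le_of_lt hik)
      rw [hins, Finset.sum_insert hnot] at h1
      rw [hFstep] at h1
      linarith
    -- coordinates outside the range of φ are zero
    have hz12 : ∀ j, (∀ i : Fin k, φ i ≠ j) → x1 j = 0 ∧ x2 j = 0 := by
      intro j hj
      have hxj : x j = 0 := hzero j hj
      have hcomb : a * x1 j + b * x2 j = 0 := by
        have h := congrFun hsum j
        simp only [Pi.add_apply, Pi.smul_apply, smul_eq_mul] at h
        rw [hxj] at h
        exact h
      have h1n := (hb1 j).1
      have h2n := (hb2 j).1
      have hbn : 0 ≤ b * x2 j := mul_nonneg hb.le h2n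
      have han : 0 ≤ a * x1 j := mul_nonneg ha.le h1n
      constructor
      · have hA0 : a * x1 j = 0 := le_antisymm (by linarith) han
        rcases mul_eq_zero.mp hA0 with h | h
        · exact absurd h (ne_of_gt ha)
        · exact h
      · have hA0 : b * x2 j = 0 := le_antisymm (by linarith) hbn
        rcases mul_eq_zero.mp hA0 with h | h
        · exact absurd h (ne_of_gt hb)
        · exact h
    constructor
    · funext j
      by_cases hj : ∃ i : Fin k, φ i = j
      · obtain ⟨i, rfl⟩ := hj
        rw [main x1 (fun r hr => (hkey r hr).1) i, hval i]
      · push_neg at hj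
        rw [(hz12 j hj).1, hzero j hj]
    · funext j
      by_cases hj : ∃ i : Fin k, φ i = j
      · obtain ⟨i, rfl⟩ := hj
        rw [main x2 (fun r hr => (hkey r hr).2) i, hval i]
      · push_neg at hj
        rw [(hz12 j hj).2, hzero j hj]
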